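/- arXiv:2603.28230 — 2 statements merged into one kernel-verified Lean document; each statement's English description precedes it below -/
import Mathlib

section
/- Let R = F_2[x^{±1}, y^{±1}] with antipode f ↦ f̄, let u = x^a y^b be a monomial, and suppose C = [[C_{11}, C_{12}],[C_{21}, C_{22}]] is a 2×2 matrix over R satisfying C·d = d̃·u^{-1}, where d = (1+x^{-1}, 1+y^{-1})^T and d̃ = (1+y, 1+x)^T. Then there exist p', q' ∈ R such that C_{11} = p'(1+y^{-1}), C_{12} = y·u^{-1} + p'(1+x^{-1}), C_{21} = u^{-1}x + q'(1+y^{-1}), C_{22} = q'(1+x^{-1}). -/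
open AddMonoidAlgebra

/-- The Laurent polynomial ring `R = F₂[x^{±1}, y^{±1}]`, realized as the group algebra
of `ℤ × ℤ` over `F₂`; the monomial `x^a y^b` corresponds to `single (a, b) 1`. -/
abbrev R2 : Type := AddMonoidAlgebra (ZMod 2) (ℤ × ℤ)

/-- The monomial `x^a y^b` in `R2`. -/
noncomputable def mono (a b : ℤ) : R2 := AddMonoidAlgebra.single (a, b) 1

/-- The antipode map `x ↦ x⁻¹`, `y ↦ y⁻¹`, the `F₂`-algebra involution induced by
negation on the exponent group `ℤ × ℤ`. -/
noncomputable def bar (f : R2) : R2 :=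
  AddMonoidAlgebra.domCongr (ZMod 2) (ZMod 2) (AddEquiv.neg (ℤ × ℤ)) f

/-- The column vector `d = (1+x⁻¹, 1+y⁻¹)ᵀ`. -/
noncomputable def dcol : Matrix (Fin 2) (Fin 1) R2 :=
  !![1 + mono (-1) 0;
     1 + mono 0 (-1)]

/-- The column vector `d̃ = (1+y, 1+x)ᵀ`. -/
noncomputable def dtcol : Matrix (Fin 2) (Fin 1) R2 :=
  !![1 + mono 0 1;
     1 + mono 1 0]

instance : CharP R2 2 := charP_of_injective_algebraMap' (ZMod 2) (A := R2) 2

lemma mono_mul (a b c d : ℤ) : mono a b * mono c d = mono (a+c) (b+d) := by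
  simp [mono, AddMonoidAlgebra.single_mul_single, Prod.mk_add_mk]

lemma mono_zero : mono 0 0 = 1 := rfl

lemma rearr (A B D : R2) : A + B + (B + D) = A + D := by
  have : A + B + (B + D) = A + D + (B + B) := by ring
  rw [this, CharTwo.add_self_eq_zero, add_zero]

lemma rearr2 (A B D : R2) : A + B + (D + B) = A + D := by
  have : A + B + (D + B) = A + D + (B + B) := by ring
  rw [this, CharTwo.add_self_eq_zero, add_zero]

lemma cancel (A B : R2) : A + B + A = B := by
  have : A + B + A = B + (A + A) := by ring
  rw [this, CharTwo.add_self_eq_zero, add_zero]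

lemma char2_move (A B D : R2) (h : A + B = D) : A = D + B := by
  rw [← h, add_assoc, CharTwo.add_self_eq_zero, add_zero]

/-- The projection ring hom killing `y` (sends `x^i y^j ↦ x^i`). -/
noncomputable def phiX : R2 →+* R2 := AddMonoidAlgebra.mapDomainRingHom (ZMod 2)
  ((AddMonoidHom.inl ℤ ℤ).comp (AddMonoidHom.fst ℤ ℤ))

/-- The projection ring hom killing `x` (sends `x^i y^j ↦ y^j`). -/
noncomputable def phiY : R2 →+* R2 := AddMonoidAlgebra.mapDomainRingHom (ZMod 2)
  ((AddMonoidHom.inr ℤ ℤ).comp (AddMonoidHom.snd ℤ ℤ))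

lemma phiX_single (i j : ℤ) (c : ZMod 2) :
    phiX (AddMonoidAlgebra.single (i, j) c) = AddMonoidAlgebra.single (i, (0:ℤ)) c := by
  simp [phiX, AddMonoidAlgebra.mapDomainRingHom]

lemma phiY_single (i j : ℤ) (c : ZMod 2) :
    phiY (AddMonoidAlgebra.single (i, j) c) = AddMonoidAlgebra.single ((0:ℤ), j) c := by
  simp [phiY, AddMonoidAlgebra.mapDomainRingHom]

/-- `1 + y⁻¹` divides `y^j + 1` for all `j`. -/
lemma divY (j : ℤ) : ∃ h : R2, mono 0 j + 1 = h * (1 + mono 0 (-1)) := by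
  induction j using Int.induction_on with
  | zero => exact ⟨0, by rw [mono_zero, CharTwo.add_self_eq_zero, zero_mul]⟩
  | succ k ih =>
    obtain ⟨h, hh⟩ := ih
    refine ⟨mono 0 1 * h + mono 0 1, ?_⟩
    have step : (mono 0 1 * h + mono 0 1) * (1 + mono 0 (-1))
        = mono 0 1 * (mono 0 k + 1) + mono 0 1 * (1 + mono 0 (-1)) := by
      rw [hh]; ring
    rw [step]
    simp only [mul_add, mul_one, mono_mul]
    norm_num
    rw [show (1:ℤ) + (k:ℤ) = (k:ℤ) + 1 by ring, mono_zero, rearr]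
  | pred k ih =>
    obtain ⟨h, hh⟩ := ih
    refine ⟨mono 0 (-1) * h + 1, ?_⟩
    have step : (mono 0 (-1) * h + 1) * (1 + mono 0 (-1))
        = mono 0 (-1) * (mono 0 (-k) + 1) + (1 + mono 0 (-1)) := by
      rw [hh]; ring
    rw [step]
    simp only [mul_add, mul_one, mono_mul]
    norm_num
    rw [show (-1:ℤ) + -(k:ℤ) = -(k:ℤ) - 1 by ring, rearr2]

/-- `1 + x⁻¹` divides `x^i + 1` for all `i`. -/
lemma divX (i : ℤ) : ∃ h : R2, mono i 0 + 1 = h * (1 + mono (-1) 0) := by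
  induction i using Int.induction_on with
  | zero => exact ⟨0, by rw [mono_zero, CharTwo.add_self_eq_zero, zero_mul]⟩
  | succ k ih =>
    obtain ⟨h, hh⟩ := ih
    refine ⟨mono 1 0 * h + mono 1 0, ?_⟩
    have step : (mono 1 0 * h + mono 1 0) * (1 + mono (-1) 0)
        = mono 1 0 * (mono k 0 + 1) + mono 1 0 * (1 + mono (-1) 0) := by
      rw [hh]; ring
    rw [step]
    simp only [mul_add, mul_one, mono_mul]
    norm_num
    rw [show (1:ℤ) + (k:ℤ) = (k:ℤ) + 1 by ring, mono_zero, rearr]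
  | pred k ih =>
    obtain ⟨h, hh⟩ := ih
    refine ⟨mono (-1) 0 * h + 1, ?_⟩
    have step : (mono (-1) 0 * h + 1) * (1 + mono (-1) 0)
        = mono (-1) 0 * (mono (-k) 0 + 1) + (1 + mono (-1) 0) := by
      rw [hh]; ring
    rw [step]
    simp only [mul_add, mul_one, mono_mul]
    norm_num
    rw [show (-1:ℤ) + -(k:ℤ) = -(k:ℤ) - 1 by ring, rearr2]

/-- Every `f` equals its image under `phiX` modulo the ideal `(1 + y⁻¹)`. -/
lemma modY (f : R2) : ∃ p : R2, f + phiX f = p * (1 + mono 0 (-1)) := by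
  induction f using AddMonoidAlgebra.induction with
  | zero => exact ⟨0, by simp⟩
  | single_add ij c f _ _ ih =>
    obtain ⟨p, hp⟩ := ih
    obtain ⟨i, j⟩ := ij
    obtain ⟨h, hh⟩ := divY j
    refine ⟨AddMonoidAlgebra.single (i, (0:ℤ)) c * h + p, ?_⟩
    rw [map_add, phiX_single]
    have key : AddMonoidAlgebra.single (i,j) c + AddMonoidAlgebra.single (i,(0:ℤ)) c =
        AddMonoidAlgebra.single (i,(0:ℤ)) c * (mono 0 j + 1) := by
      rw [mul_add, mul_one]
      congr 1
      simp [mono, AddMonoidAlgebra.single_mul_single]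
    rw [add_add_add_comm, key, hh, hp, ← mul_assoc, ← add_mul]

/-- Every `f` equals its image under `phiY` modulo the ideal `(1 + x⁻¹)`. -/
lemma modX (f : R2) : ∃ p : R2, f + phiY f = p * (1 + mono (-1) 0) := by
  induction f using AddMonoidAlgebra.induction with
  | zero => exact ⟨0, by simp⟩
  | single_add ij c f _ _ ih =>
    obtain ⟨p, hp⟩ := ih
    obtain ⟨i, j⟩ := ij
    obtain ⟨h, hh⟩ := divX i
    refine ⟨AddMonoidAlgebra.single ((0:ℤ), j) c * h + p, ?_⟩
    rw [map_add, phiY_single]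
    have key : AddMonoidAlgebra.single (i,j) c + AddMonoidAlgebra.single ((0:ℤ),j) c =
        AddMonoidAlgebra.single ((0:ℤ),j) c * (mono i 0 + 1) := by
      rw [mul_add, mul_one]
      congr 1
      simp [mono, AddMonoidAlgebra.single_mul_single]
    rw [add_add_add_comm, key, hh, hp, ← mul_assoc, ← add_mul]

lemma dx_ne : (1 + mono (-1) 0 : R2) ≠ 0 := by
  intro h
  have h1 : mono (-1) 0 = (1 : R2) := by
    have h2 := eq_neg_of_add_eq_zero_right h
    rw [h2]; exact CharTwo.neg_eq 1
  have h3 := (AddMonoidAlgebra.single_inj (m₁ := ((-1:ℤ),(0:ℤ))) (m₂ := ((0:ℤ),(0:ℤ))) (r₁ := (1:ZMod 2)) (r₂ := 1)).mp h1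
  simp [Prod.ext_iff] at h3

lemma dy_ne : (1 + mono 0 (-1) : R2) ≠ 0 := by
  intro h
  have h1 : mono 0 (-1) = (1 : R2) := by
    have h2 := eq_neg_of_add_eq_zero_right h
    rw [h2]; exact CharTwo.neg_eq 1
  have h3 := (AddMonoidAlgebra.single_inj (m₁ := ((0:ℤ),(-1:ℤ))) (m₂ := ((0:ℤ),(0:ℤ))) (r₁ := (1:ZMod 2)) (r₂ := 1)).mp h1
  simp [Prod.ext_iff] at h3

/-- Key syzygy lemma: if `f·(1+x⁻¹) = g·(1+y⁻¹)` then `(1+y⁻¹) ∣ f`. -/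
lemma keyA (f g : R2) (h : f * (1 + mono (-1) 0) = g * (1 + mono 0 (-1))) :
    ∃ p : R2, f = p * (1 + mono 0 (-1)) := by
  have hphi := congrArg phiX h
  rw [map_mul, map_mul, map_add, map_add, map_one] at hphi
  have e1 : phiX (mono (-1) 0) = mono (-1) 0 := phiX_single (-1) 0 1
  have e2 : phiX (mono 0 (-1)) = 1 := phiX_single 0 (-1) 1
  rw [e1, e2, CharTwo.add_self_eq_zero, mul_zero] at hphi
  have hf0 : phiX f = 0 := by
    rcases mul_eq_zero.mp hphi with h' | h'
    · exact h'
    · exact absurd h' dx_ne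
  obtain ⟨p, hp⟩ := modY f
  rw [hf0, add_zero] at hp
  exact ⟨p, hp⟩

/-- Key syzygy lemma, other direction: if `g·(1+y⁻¹) = f·(1+x⁻¹)` then `(1+x⁻¹) ∣ g`. -/
lemma keyB (f g : R2) (h : g * (1 + mono 0 (-1)) = f * (1 + mono (-1) 0)) :
    ∃ q : R2, g = q * (1 + mono (-1) 0) := by
  have hphi := congrArg phiY h
  rw [map_mul, map_mul, map_add, map_add, map_one] at hphi
  have e1 : phiY (mono 0 (-1)) = mono 0 (-1) := phiY_single 0 (-1) 1
  have e2 : phiY (mono (-1) 0) = 1 := phiY_single (-1) 0 1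
  rw [e1, e2, CharTwo.add_self_eq_zero, mul_zero] at hphi
  have hg0 : phiY g = 0 := by
    rcases mul_eq_zero.mp hphi with h' | h'
    · exact h'
    · exact absurd h' dy_ne
  obtain ⟨q, hq⟩ := modX g
  rw [hg0, add_zero] at hq
  exact ⟨q, hq⟩

lemma hy_fact : mono 0 1 * (1 + mono 0 (-1)) = 1 + mono 0 1 := by
  rw [mul_add, mul_one, mono_mul]
  norm_num
  rw [mono_zero, add_comm]

lemma hx_fact : mono 1 0 * (1 + mono (-1) 0) = 1 + mono 1 0 := by
  rw [mul_add, mul_one, mono_mul]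
  norm_num
  rw [mono_zero, add_comm]

/-- Any solution `C` of `C·d = d̃·u⁻¹` (with `u = x^a y^b`) is the particular solution
`C₀ = [[0, y u⁻¹],[u⁻¹ x, 0]]` plus a multiple of the syzygy `(1+y⁻¹, 1+x⁻¹)`. -/
theorem general_solution_Cd (a b : ℤ) (C : Matrix (Fin 2) (Fin 2) R2)
    (hC : C * dcol = mono (-a) (-b) • dtcol) :
    ∃ p' q' : R2,
      C 0 0 = p' * (1 + mono 0 (-1)) ∧
      C 0 1 = mono 0 1 * mono (-a) (-b) + p' * (1 + mono (-1) 0) ∧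
      C 1 0 = mono (-a) (-b) * mono 1 0 + q' * (1 + mono 0 (-1)) ∧
      C 1 1 = q' * (1 + mono (-1) 0) := by
  have h0 := congrFun (congrFun hC 0) 0
  have h1 := congrFun (congrFun hC 1) 0
  simp [Matrix.mul_apply, Fin.sum_univ_two, dcol, dtcol] at h0 h1
  set w : R2 := mono 0 1 * mono (-a) (-b) with hw
  have hrhs0 : mono (-a) (-b) * (1 + mono 0 1) = w * (1 + mono 0 (-1)) := by
    rw [← hy_fact, hw]; ring
  rw [hrhs0] at h0
  set v : R2 := mono (-a) (-b) * mono 1 0 with hv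
  have hrhs1 : mono (-a) (-b) * (1 + mono 1 0) = v * (1 + mono (-1) 0) := by
    rw [← hx_fact, hv]; ring
  rw [hrhs1] at h1
  -- Row 1:  C00·dx = (w + C01)·dy
  have e0 : C 0 0 * (1 + mono (-1) 0) = (w + C 0 1) * (1 + mono 0 (-1)) := by
    have := char2_move _ _ _ h0
    rw [this, add_mul]
  obtain ⟨p', hp'⟩ := keyA (C 0 0) (w + C 0 1) e0
  -- Row 2:  C11·dy = (v + C10)·dx
  have e1 : C 1 1 * (1 + mono 0 (-1)) = (v + C 1 0) * (1 + mono (-1) 0) := by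
    have h1' : C 1 1 * (1 + mono 0 (-1)) + C 1 0 * (1 + mono (-1) 0)
        = v * (1 + mono (-1) 0) := by rw [← h1]; ring
    have := char2_move _ _ _ h1'
    rw [this, add_mul]
  obtain ⟨q', hq'⟩ := keyB (v + C 1 0) (C 1 1) e1
  refine ⟨p', q', hp', ?_, ?_, hq'⟩
  · rw [hp'] at e0
    have hcanc : p' * (1 + mono (-1) 0) = w + C 0 1 := by
      apply mul_right_cancel₀ dy_ne
      rw [← e0]; ring
    have h2 := char2_move _ _ _ hcanc.symm
    have h3 : w + p' * (1 + mono (-1) 0) = C 0 1 := by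
      rw [h2]; exact cancel _ _
    rw [hw] at h3
    exact h3.symm
  · rw [hq'] at e1
    have hcanc : q' * (1 + mono 0 (-1)) = v + C 1 0 := by
      apply mul_right_cancel₀ dx_ne
      rw [← e1]; ring
    have h2 := char2_move _ _ _ hcanc.symm
    have h3 : v + q' * (1 + mono 0 (-1)) = C 1 0 := by
      rw [h2]; exact cancel _ _
    rw [hv] at h3
    exact h3.symm
end

section
/- Let l be an odd positive integer. With the blocked formalism over R_l = F_2[X^{±1},Y^{±1}] (X = x^l, Y = y^l): suppose P, Q ∈ Mat_{l²}(R_l) satisfy P(1+T_y†) = (1+T_y)P†, Q(1+T_x†) = (1+T_x)Q†, and T_y U^{-1} + P(1+T_x†) = T_x† U + (1+T_y)Q†, where U represents multiplication by a monomial u = x^a y^b. Then setting p = φ(P), q = φ(Q) with φ(M) = b·M·b†, we obtain p = y·p̄, q = x·q̄, and (1+x)p + (1+y)q = u + xy·u^{-1} in R_1 = F_2[x^{±1},y^{±1}]; consequently no such P, Q exist. -/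
open AddMonoidAlgebra

/-- Antipode-transpose (`†`) of a matrix over `R2`. -/
noncomputable def dag {α β : Type*} (M : Matrix α β R2) : Matrix β α R2 :=
  (M.map bar).transpose

/-- The inclusion `R_l = F₂[X^{±1},Y^{±1}] → R₁`, `X ↦ x^l`, `Y ↦ y^l`: on exponents it is
`(a, b) ↦ (l·a, l·b)`. We realize `R_l` as a copy of `R2` and `ι l` as the corresponding
algebra embedding. -/
noncomputable def iota (l : ℕ) : R2 → R2 :=
  AddMonoidAlgebra.mapDomainAlgHom (ZMod 2) (ZMod 2)
    (AddMonoidHom.mk' (fun p : ℤ × ℤ => ((l : ℤ) * p.1, (l : ℤ) * p.2))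
      (fun p q => by simp [Prod.ext_iff, mul_add]))

/-- The basis `b = (x^i y^j)_{0 ≤ i, j < l}` of `R₁` over `R_l`. -/
noncomputable def bvec (l : ℕ) (p : Fin l × Fin l) : R2 := mono (p.1 : ℤ) (p.2 : ℤ)

/-- `T` is the matrix over `R_l` representing multiplication by `g` on `R₁` in the basis
`b`, i.e. `b·T = g·b`. -/
def RepBy (l : ℕ) (T : Matrix (Fin l × Fin l) (Fin l × Fin l) R2) (g : R2) : Prop :=
  ∀ q, (∑ p, bvec l p * iota l (T p q)) = g * bvec l q

/-- `φ(M) = b·M·b†`. -/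
noncomputable def phi (l : ℕ) (M : Matrix (Fin l × Fin l) (Fin l × Fin l) R2) : R2 :=
  ∑ p, ∑ q, bvec l p * iota l (M p q) * bar (bvec l q)

lemma bar_add (f g : R2) : bar (f + g) = bar f + bar g := map_add _ f g
lemma bar_mul (f g : R2) : bar (f * g) = bar f * bar g := map_mul _ f g
lemma bar_one : bar 1 = 1 := map_one _
lemma bar_single (v : ℤ×ℤ) (c : ZMod 2) :
    bar (AddMonoidAlgebra.single v c) = AddMonoidAlgebra.single (-v) c := by
  simp [bar]
lemma bar_mono (a b : ℤ) : bar (mono a b) = mono (-a) (-b) := by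
  simp [mono, bar_single, Prod.neg_mk]
lemma bar_bar (f : R2) : bar (bar f) = f := by
  induction f using AddMonoidAlgebra.induction_linear with
  | zero => simp [bar]
  | add f g hf hg => rw [bar_add, bar_add, hf, hg]
  | single v c => rw [bar_single, bar_single, neg_neg]
lemma bar_zero : bar 0 = 0 := map_zero _
lemma bar_sum {ι : Type*} (s : Finset ι) (f : ι → R2) :
    bar (∑ i ∈ s, f i) = ∑ i ∈ s, bar (f i) := map_sum _ f s

lemma iota_add (l : ℕ) (f g : R2) : iota l (f + g) = iota l f + iota l g := map_add _ f g
lemma iota_mul (l : ℕ) (f g : R2) : iota l (f * g) = iota l f * iota l g := map_mul _ f g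
lemma iota_one (l : ℕ) : iota l 1 = 1 := map_one _
lemma iota_zero (l : ℕ) : iota l 0 = 0 := map_zero _
lemma iota_single (l : ℕ) (v : ℤ×ℤ) (c : ZMod 2) :
    iota l (AddMonoidAlgebra.single v c) = AddMonoidAlgebra.single ((l:ℤ)*v.1, (l:ℤ)*v.2) c := by
  simp [iota, AddMonoidAlgebra.mapDomainAlgHom, Finsupp.mapDomain_single]
lemma iota_mono (l : ℕ) (a b : ℤ) : iota l (mono a b) = mono (l*a) (l*b) := by
  simp [mono, iota_single]
lemma iota_bar (l : ℕ) (f : R2) : iota l (bar f) = bar (iota l f) := by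
  induction f using AddMonoidAlgebra.induction_linear with
  | zero => rw [bar_zero, iota_zero, bar_zero]
  | add f g hf hg => rw [bar_add, iota_add, iota_add, bar_add, hf, hg]
  | single v c => rw [bar_single, iota_single, iota_single, bar_single, Prod.fst_neg, Prod.snd_neg,
      mul_neg, mul_neg, Prod.neg_mk]
lemma iota_sum (l : ℕ) {ι : Type*} (s : Finset ι) (f : ι → R2) :
    iota l (∑ i ∈ s, f i) = ∑ i ∈ s, iota l (f i) := map_sum _ f s

lemma two_eq_zero : (2 : R2) = 0 := by
  have : ((2:ℕ) : R2) = algebraMap (ZMod 2) R2 ((2:ℕ) : ZMod 2) := by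
    rw [map_natCast]
  have h2 : ((2:ℕ) : ZMod 2) = 0 := by decide
  rw [h2, map_zero] at this
  simpa using this
lemma add_self (f : R2) : f + f = 0 := by
  rw [← two_mul, two_eq_zero, zero_mul]
lemma eq_of_add_eq_zero {f g : R2} (h : f + g = 0) : f = g := by
  have := congrArg (· + g) h
  simpa [add_assoc, add_self] using this

section PhiLemmas
variable {l : ℕ}
local notation "Mat" => Matrix (Fin l × Fin l) (Fin l × Fin l) R2

lemma phi_add (M N : Mat) : phi l (M + N) = phi l M + phi l N := by
  unfold phi
  rw [← Finset.sum_add_distrib]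
  apply Finset.sum_congr rfl; intro p _
  rw [← Finset.sum_add_distrib]
  apply Finset.sum_congr rfl; intro q _
  rw [Matrix.add_apply, iota_add]; ring

lemma phi_mul_left {T : Mat} {g : R2} (hT : RepBy l T g) (M : Mat) :
    phi l (T * M) = g * phi l M := by
  unfold phi
  calc ∑ p, ∑ q, bvec l p * iota l ((T*M) p q) * bar (bvec l q)
      = ∑ p, ∑ r, ∑ q, (bvec l p * iota l (T p r)) * (iota l (M r q) * bar (bvec l q)) := by
        apply Finset.sum_congr rfl; intro p _
        rw [Finset.sum_comm]
        apply Finset.sum_congr rfl; intro q _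
        rw [Matrix.mul_apply, iota_sum, Finset.mul_sum, Finset.sum_mul]
        apply Finset.sum_congr rfl; intro r _
        rw [iota_mul]; ring
    _ = ∑ r, (∑ p, bvec l p * iota l (T p r)) * (∑ q, iota l (M r q) * bar (bvec l q)) := by
        rw [Finset.sum_comm]
        apply Finset.sum_congr rfl; intro r _
        rw [Finset.sum_mul_sum]
    _ = g * ∑ r, ∑ q, bvec l r * iota l (M r q) * bar (bvec l q) := by
        rw [Finset.mul_sum]
        apply Finset.sum_congr rfl; intro r _
        rw [hT r, Finset.mul_sum, Finset.mul_sum]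
        apply Finset.sum_congr rfl; intro q _
        ring

lemma phi_mul_dag_right {T : Mat} {g : R2} (hT : RepBy l T g) (M : Mat) :
    phi l (M * dag T) = phi l M * bar g := by
  unfold phi
  calc ∑ p, ∑ q, bvec l p * iota l ((M * dag T) p q) * bar (bvec l q)
      = ∑ p, ∑ q, ∑ r, (bvec l p * iota l (M p r)) * bar (bvec l q * iota l (T q r)) := by
        refine Finset.sum_congr rfl fun p _ => Finset.sum_congr rfl fun q _ => ?_
        rw [Matrix.mul_apply, iota_sum, Finset.mul_sum, Finset.sum_mul]
        refine Finset.sum_congr rfl fun r _ => ?_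
        simp only [dag, Matrix.transpose_apply, Matrix.map_apply]
        rw [iota_mul, iota_bar, bar_mul]
        ring
    _ = ∑ p, ∑ r, (bvec l p * iota l (M p r)) * (∑ q, bar (bvec l q * iota l (T q r))) := by
        refine Finset.sum_congr rfl fun p _ => ?_
        rw [Finset.sum_comm]
        refine Finset.sum_congr rfl fun r _ => ?_
        rw [Finset.mul_sum]
    _ = ∑ p, ∑ r, (bvec l p * iota l (M p r)) * bar (g * bvec l r) := by
        apply Finset.sum_congr rfl; intro p _
        apply Finset.sum_congr rfl; intro r _
        rw [← bar_sum, hT r]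
    _ = (∑ p, ∑ r, bvec l p * iota l (M p r) * bar (bvec l r)) * bar g := by
        rw [Finset.sum_mul]
        apply Finset.sum_congr rfl; intro p _
        rw [Finset.sum_mul]
        apply Finset.sum_congr rfl; intro r _
        rw [bar_mul]; ring

lemma phi_dag (M : Mat) : phi l (dag M) = bar (phi l M) := by
  unfold phi
  rw [bar_sum, Finset.sum_comm]
  apply Finset.sum_congr rfl; intro q _
  rw [bar_sum]
  apply Finset.sum_congr rfl; intro p _
  show bvec l p * iota l (bar (M q p)) * bar (bvec l q) = bar (bvec l q * iota l (M q p) * bar (bvec l p))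
  rw [bar_mul, bar_mul, bar_bar, iota_bar]; ring

lemma phi_one (hl : Odd l) : phi l (1 : Mat) = 1 := by
  unfold phi
  have h1 : ∀ p : Fin l × Fin l, ∑ q, bvec l p * iota l ((1 : Mat) p q) * bar (bvec l q) = 1 := by
    intro p
    rw [Finset.sum_eq_single p]
    · rw [Matrix.one_apply_eq, iota_one, mul_one, bvec, bar_mono, mono_mul]
      simp [mono_zero]
    · intro q _ hq
      rw [Matrix.one_apply_ne (Ne.symm hq), iota_zero, mul_zero, zero_mul]
    · intro h; exact absurd (Finset.mem_univ p) h
  rw [Finset.sum_congr rfl (fun p _ => h1 p), Finset.sum_const, Finset.card_univ]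
  have h2 : Odd (l * l) := hl.mul hl
  rw [Fintype.card_prod, Fintype.card_fin, nsmul_eq_mul, mul_one]
  have h3 : ((l*l : ℕ) : R2) = algebraMap (ZMod 2) R2 ((l*l : ℕ) : ZMod 2) := by
    rw [map_natCast]
  have h4 : ((l*l : ℕ) : ZMod 2) = 1 := by
    rw [← ZMod.natCast_mod, Nat.odd_iff.mp h2, Nat.cast_one]
  rw [h3, h4, map_one]
end PhiLemmas

section Inj
variable {l : ℕ}

lemma iota_apply_mul (hl : 0 < l) (f : R2) (v : ℤ × ℤ) :
    (iota l f).coeff ((l:ℤ)*v.1, (l:ℤ)*v.2) = f.coeff v := by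
  induction f using AddMonoidAlgebra.induction_linear with
  | zero => simp [iota_zero]
  | add f g hf hg => rw [iota_add, AddMonoidAlgebra.coeff_add, Finsupp.add_apply, hf, hg,
      AddMonoidAlgebra.coeff_add, Finsupp.add_apply]
  | single u c =>
    rw [iota_single]
    by_cases h : u = v
    · subst h; simp
    · rw [AddMonoidAlgebra.coeff_single_apply, AddMonoidAlgebra.coeff_single_apply, if_neg, if_neg h]
      intro hc
      apply h
      have hlz : (l:ℤ) ≠ 0 := by exact_mod_cast hl.ne'
      rw [Prod.mk.injEq] at hc
      exact Prod.ext (mul_left_cancel₀ hlz hc.1) (mul_left_cancel₀ hlz hc.2)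

lemma iota_apply_ne (f : R2) (w : ℤ × ℤ) (h : ∀ v : ℤ × ℤ, w ≠ ((l:ℤ)*v.1, (l:ℤ)*v.2)) :
    (iota l f).coeff w = 0 := by
  induction f using AddMonoidAlgebra.induction_linear with
  | zero => simp [iota_zero]
  | add f g hf hg => rw [iota_add, AddMonoidAlgebra.coeff_add, Finsupp.add_apply, hf, hg, add_zero]
  | single u c =>
    rw [iota_single, AddMonoidAlgebra.coeff_single_apply, if_neg]
    exact fun hc => h u hc.symm

end Inj

section Inj2
variable {l : ℕ}

lemma coe_bound (i : Fin l) : 0 ≤ (i : ℤ) ∧ (i : ℤ) < l := by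
  constructor
  · exact_mod_cast Nat.zero_le _
  · exact_mod_cast i.isLt

lemma psi_eval (hl : 0 < l) (c : Fin l × Fin l → R2) (p : Fin l × Fin l) (v : ℤ × ℤ) :
    (∑ p', bvec l p' * iota l (c p')).coeff
      (((p.1 : ℤ) + l * v.1, (p.2 : ℤ) + l * v.2)) = (c p).coeff v := by
  rw [AddMonoidAlgebra.coeff_sum, Finsupp.finset_sum_apply, Finset.sum_eq_single p]
  · rw [bvec, mono, AddMonoidAlgebra.coeff_single_mul_apply, one_mul]
    have : (-((p.1:ℤ), (p.2:ℤ)) + ((p.1 : ℤ) + l * v.1, (p.2 : ℤ) + l * v.2))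
        = ((l:ℤ)*v.1, (l:ℤ)*v.2) := by
      simp [Prod.ext_iff]
    rw [this, iota_apply_mul hl]
  · intro q _ hq
    rw [bvec, mono, AddMonoidAlgebra.coeff_single_mul_apply, one_mul]
    rw [iota_apply_ne]
    intro w hw
    apply hq
    rw [Prod.mk.injEq] at hw
    simp only [Prod.fst_add, Prod.snd_add, Prod.fst_neg, Prod.snd_neg] at hw
    obtain ⟨h1, h2⟩ := hw
    -- h1 : -(q.1:ℤ) + ((p.1:ℤ) + l * v.1) = l * w.1
    obtain ⟨hq1, hq1'⟩ := coe_bound q.1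
    obtain ⟨hq2, hq2'⟩ := coe_bound q.2
    obtain ⟨hp1, hp1'⟩ := coe_bound p.1
    obtain ⟨hp2, hp2'⟩ := coe_bound p.2
    have e1 : (p.1:ℤ) - (q.1:ℤ) = (l:ℤ) * (w.1 - v.1) := by linarith [h1]; 
    have e2 : (p.2:ℤ) - (q.2:ℤ) = (l:ℤ) * (w.2 - v.2) := by linarith [h2]
    have hl' : (0:ℤ) < l := by exact_mod_cast hl
    have k1 : w.1 - v.1 = 0 := by nlinarith [e1]
    have k2 : w.2 - v.2 = 0 := by nlinarith [e2]
    rw [k1, mul_zero] at e1; rw [k2, mul_zero] at e2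
    have : (q.1 : ℤ) = p.1 := by linarith
    have h2' : (q.2 : ℤ) = p.2 := by linarith
    exact Prod.ext (Fin.ext (by exact_mod_cast this)) (Fin.ext (by exact_mod_cast h2'))
  · intro h; exact absurd (Finset.mem_univ p) h

lemma psi_inj (hl : 0 < l) {c d : Fin l × Fin l → R2}
    (h : (∑ p, bvec l p * iota l (c p)) = ∑ p, bvec l p * iota l (d p)) : c = d := by
  funext p
  ext v
  have := congrArg (fun f : R2 => f.coeff (((p.1 : ℤ) + l * v.1, (p.2 : ℤ) + l * v.2))) h
  simpa [-AddMonoidAlgebra.coeff_sum, psi_eval hl] using this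

lemma repby_unique (hl : 0 < l) {T T' : Matrix (Fin l × Fin l) (Fin l × Fin l) R2} {g : R2}
    (h : RepBy l T g) (h' : RepBy l T' g) : T = T' := by
  apply Matrix.ext
  intro p q
  exact congrFun (psi_inj hl ((h q).trans (h' q).symm)) p

lemma repby_mul {S T : Matrix (Fin l × Fin l) (Fin l × Fin l) R2} {h g : R2}
    (hS : RepBy l S h) (hT : RepBy l T g) : RepBy l (S * T) (h * g) := by
  intro q
  calc ∑ p, bvec l p * iota l ((S * T) p q)
      = ∑ p, ∑ r, (bvec l p * iota l (S p r)) * iota l (T r q) := by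
        apply Finset.sum_congr rfl; intro p _
        rw [Matrix.mul_apply, iota_sum, Finset.mul_sum]
        apply Finset.sum_congr rfl; intro r _
        rw [iota_mul]; ring
    _ = ∑ r, (∑ p, bvec l p * iota l (S p r)) * iota l (T r q) := by
        rw [Finset.sum_comm]
        exact Finset.sum_congr rfl fun r _ => (Finset.sum_mul ..).symm
    _ = ∑ r, (h * bvec l r) * iota l (T r q) := by
        exact Finset.sum_congr rfl fun r _ => by rw [hS r]
    _ = h * (g * bvec l q) := by
        rw [← hT q, Finset.mul_sum]
        exact Finset.sum_congr rfl fun r _ => by ring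
    _ = (h * g) * bvec l q := by ring
end Inj2

section EmatSec
variable {l : ℕ}

noncomputable def Emat (l : ℕ) (s t : ℤ) : Matrix (Fin l × Fin l) (Fin l × Fin l) R2 :=
  fun p q => if ((s + (q.1:ℤ)) % l = (p.1:ℤ) ∧ (t + (q.2:ℤ)) % l = (p.2:ℤ)) then
      mono ((s + (q.1:ℤ)) / l) ((t + (q.2:ℤ)) / l) else 0

def finOf (hl : 0 < l) (z : ℤ) : Fin l :=
  ⟨(z % l).toNat, by
    have hl' : (0:ℤ) < l := by exact_mod_cast hl
    have h1 : 0 ≤ z % l := Int.emod_nonneg z (ne_of_gt hl')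
    have h2 : z % l < l := Int.emod_lt_of_pos z hl'
    omega⟩

lemma finOf_coe (hl : 0 < l) (z : ℤ) : ((finOf hl z : Fin l) : ℤ) = z % l := by
  have hl' : (0:ℤ) < l := by exact_mod_cast hl
  have h1 : 0 ≤ z % l := Int.emod_nonneg z (ne_of_gt hl')
  simp [finOf, Int.toNat_of_nonneg h1]

lemma emat_repby (hl : 0 < l) (s t : ℤ) : RepBy l (Emat l s t) (mono s t) := by
  intro q
  set p0 : Fin l × Fin l := (finOf hl (s + (q.1:ℤ)), finOf hl (t + (q.2:ℤ))) with hp0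
  rw [Finset.sum_eq_single p0]
  · have hc1 : (s + (q.1:ℤ)) % l = (p0.1:ℤ) := (finOf_coe hl _).symm
    have hc2 : (t + (q.2:ℤ)) % l = (p0.2:ℤ) := (finOf_coe hl _).symm
    simp only [bvec]
    rw [Emat, if_pos ⟨hc1, hc2⟩, iota_mono, mono_mul, mono_mul]
    congr 1
    · rw [← hc1]; exact Int.emod_add_mul_ediv _ _
    · rw [← hc2]; exact Int.emod_add_mul_ediv _ _
  · intro p _ hp
    rw [Emat, if_neg, iota_zero, mul_zero]
    rintro ⟨h1, h2⟩
    apply hp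
    have e1 : (p.1:ℤ) = (p0.1:ℤ) := by rw [← h1, finOf_coe]
    have e2 : (p.2:ℤ) = (p0.2:ℤ) := by rw [← h2, finOf_coe]
    exact Prod.ext (Fin.ext (by exact_mod_cast e1)) (Fin.ext (by exact_mod_cast e2))
  · intro h; exact absurd (Finset.mem_univ p0) h

lemma emat_dag_repby (hl : 0 < l) (s t : ℤ) :
    RepBy l (dag (Emat l s t)) (mono (-s) (-t)) := by
  intro q
  have hl' : (0:ℤ) < l := by exact_mod_cast hl
  obtain ⟨hq1, hq1'⟩ := coe_bound q.1
  obtain ⟨hq2, hq2'⟩ := coe_bound q.2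
  set p0 : Fin l × Fin l := (finOf hl ((q.1:ℤ) - s), finOf hl ((q.2:ℤ) - t)) with hp0
  have hp01 : (p0.1 : ℤ) = ((q.1:ℤ) - s) % l := finOf_coe hl _
  have hp02 : (p0.2 : ℤ) = ((q.2:ℤ) - t) % l := finOf_coe hl _
  -- key mod facts
  have key1 : (s + (p0.1:ℤ)) % l = (q.1:ℤ) := by
    have h : s + (p0.1:ℤ) = (q.1:ℤ) + (l:ℤ) * (-(((q.1:ℤ) - s)/l)) := by
      rw [hp01, Int.emod_def]; ring
    rw [h, Int.add_mul_emod_self_left, Int.emod_eq_of_lt hq1 hq1']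
  have key2 : (t + (p0.2:ℤ)) % l = (q.2:ℤ) := by
    have h : t + (p0.2:ℤ) = (q.2:ℤ) + (l:ℤ) * (-(((q.2:ℤ) - t)/l)) := by
      rw [hp02, Int.emod_def]; ring
    rw [h, Int.add_mul_emod_self_left, Int.emod_eq_of_lt hq2 hq2']
  rw [Finset.sum_eq_single p0]
  · show bvec l p0 * iota l (bar (Emat l s t q p0)) = _
    simp only [bvec]
    rw [Emat, if_pos ⟨key1, key2⟩, bar_mono, iota_mono, mono_mul, mono_mul]
    have d1 := Int.emod_add_mul_ediv (s + (p0.1:ℤ)) l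
    have d2 := Int.emod_add_mul_ediv (t + (p0.2:ℤ)) l
    rw [key1] at d1; rw [key2] at d2
    congr 1
    · linarith
    · linarith
  · intro p _ hp
    show bvec l p * iota l (bar (Emat l s t q p)) = 0
    rw [Emat, if_neg, bar_zero, iota_zero, mul_zero]
    rintro ⟨h1, h2⟩
    apply hp
    obtain ⟨hpa, hpa'⟩ := coe_bound p.1
    obtain ⟨hpb, hpb'⟩ := coe_bound p.2
    have e1 : (q.1:ℤ) - s = (p.1:ℤ) + (l:ℤ) * (-((s + (p.1:ℤ))/l)) := by
      rw [← h1, Int.emod_def]; ring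
    have e2 : (q.2:ℤ) - t = (p.2:ℤ) + (l:ℤ) * (-((t + (p.2:ℤ))/l)) := by
      rw [← h2, Int.emod_def]; ring
    have f1 : (p0.1 : ℤ) = (p.1:ℤ) := by
      rw [hp01, e1, Int.add_mul_emod_self_left, Int.emod_eq_of_lt hpa hpa']
    have f2 : (p0.2 : ℤ) = (p.2:ℤ) := by
      rw [hp02, e2, Int.add_mul_emod_self_left, Int.emod_eq_of_lt hpb hpb']
    exact (Prod.ext (Fin.ext (by exact_mod_cast f1)) (Fin.ext (by exact_mod_cast f2))).symm
  · intro h; exact absurd (Finset.mem_univ p0) h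
end EmatSec

section Parity

noncomputable def lamIf (c : ℤ×ℤ → Prop) [DecidablePred c] : R2 →+ ZMod 2 :=
  (Finsupp.liftAddHom (fun v => if c v then AddMonoidHom.id (ZMod 2) else 0)).comp
    AddMonoidAlgebra.coeffAddEquiv.toAddMonoidHom

lemma lamIf_single (c : ℤ×ℤ → Prop) [DecidablePred c] (v : ℤ×ℤ) (r : ZMod 2) :
    lamIf c (AddMonoidAlgebra.single v r) = if c v then r else 0 := by
  rw [lamIf, AddMonoidHom.comp_apply]
  erw [Finsupp.liftAddHom_apply_single]
  split_ifs <;> rfl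

lemma hom_mul_push (s t : ℤ) (F G : R2 →+ ZMod 2)
    (h : ∀ (v : ℤ×ℤ) (c : ZMod 2),
      F (AddMonoidAlgebra.single ((s,t) + v) c) = G (AddMonoidAlgebra.single v c))
    (p : R2) : F (mono s t * p) = G p := by
  induction p using AddMonoidAlgebra.induction_linear with
  | zero => rw [mul_zero, map_zero, map_zero]
  | add f g hf hg => rw [mul_add, map_add, map_add, hf, hg]
  | single v c =>
      rw [mono, AddMonoidAlgebra.single_mul_single, one_mul]
      exact h v c

lemma hom_mul_bar_push (s t : ℤ) (F G : R2 →+ ZMod 2)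
    (h : ∀ (v : ℤ×ℤ) (c : ZMod 2),
      F (AddMonoidAlgebra.single ((s,t) + -v) c) = G (AddMonoidAlgebra.single v c))
    (p : R2) : F (mono s t * bar p) = G p := by
  induction p using AddMonoidAlgebra.induction_linear with
  | zero => rw [bar_zero, mul_zero, map_zero, map_zero]
  | add f g hf hg => rw [bar_add, mul_add, map_add, map_add, hf, hg]
  | single v c =>
      rw [bar_single, mono, AddMonoidAlgebra.single_mul_single, one_mul]
      exact h v c

noncomputable def lamA : R2 →+ ZMod 2 := lamIf (fun v => 1 ≤ v.1)
noncomputable def lamC : R2 →+ ZMod 2 := lamIf (fun v => v.1 = 0)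
noncomputable def lamD : R2 →+ ZMod 2 := lamIf (fun v => v.1 = 0 ∧ 1 ≤ v.2)
noncomputable def lamE : R2 →+ ZMod 2 := lamIf (fun v => v.1 = 0 ∧ v.2 ≤ 0)

lemma zmod_add_self (a : ZMod 2) : a + a = 0 := by
  rw [← two_mul]
  have : (2 : ZMod 2) = 0 := by decide
  rw [this, zero_mul]

lemma lamA_x_mul (p : R2) : lamA (mono 1 0 * p) = lamA p + lamC p := by
  have : lamA (mono 1 0 * p) = (lamA + lamC) p := by
    apply hom_mul_push
    intro v c
    simp only [lamA, lamC, lamIf_single, AddMonoidHom.add_apply, Prod.fst_add]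
    split_ifs <;> first | omega | simp [zmod_add_self] | rw [zero_add] | rw [add_zero]
  simpa using this

lemma lamA_y_mul (p : R2) : lamA (mono 0 1 * p) = lamA p := by
  apply hom_mul_push
  intro v c
  simp only [lamA, lamIf_single, Prod.fst_add]
  norm_num

lemma lamC_split (p : R2) : lamC p = lamD p + lamE p := by
  have : lamC p = (lamD + lamE) p := by
    induction p using AddMonoidAlgebra.induction_linear with
    | zero => simp
    | add f g hf hg => rw [map_add, map_add, hf, hg]
    | single v c =>
        simp only [lamC, lamD, lamE, lamIf_single, AddMonoidHom.add_apply]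
        split_ifs <;> first | omega | simp [zmod_add_self] | rw [zero_add] | rw [add_zero]
  simpa using this

lemma lamE_y_bar (p : R2) : lamE (mono 0 1 * bar p) = lamD p := by
  apply hom_mul_bar_push
  intro v c
  simp only [lamE, lamD, lamIf_single, Prod.fst_add, Prod.snd_add, Prod.fst_neg, Prod.snd_neg]
  split_ifs <;> first | rfl | omega

lemma lamC_eq_zero {p : R2} (hp : p = mono 0 1 * bar p) : lamC p = 0 := by
  rw [lamC_split]
  have h1 : lamE p = lamD p := by
    conv_lhs => rw [hp]
    exact lamE_y_bar p
  rw [h1, zmod_add_self]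

lemma lamA_mono (c d : ℤ) : lamA (mono c d) = if 1 ≤ c then 1 else 0 := by
  rw [mono, lamA, lamIf_single]

end Parity

/-- Odd-supercell no-go: if `P, Q` over `R_l` satisfy the Hermiticity and off-diagonal
conditions forced by an exact Clifford `ℤ₂` electromagnetic duality, then `p = φ(P)`,
`q = φ(Q)` satisfy `p = y·p̄`, `q = x·q̄`, and `(1+x)p + (1+y)q = u + xy·u⁻¹`; consequently
no such `P, Q` exist. -/
theorem odd_supercell_no_go (l : ℕ) (hl : Odd l) (a b : ℤ)
    (Tx Ty U V P Q : Matrix (Fin l × Fin l) (Fin l × Fin l) R2)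
    (hx : RepBy l Tx (mono 1 0)) (hy : RepBy l Ty (mono 0 1))
    (hU : RepBy l U (mono a b)) (hUV : U * V = 1) (hVU : V * U = 1)
    (hP : P * (1 + dag Ty) = (1 + Ty) * dag P)
    (hQ : Q * (1 + dag Tx) = (1 + Tx) * dag Q)
    (hoff : Ty * V + P * (1 + dag Tx) = dag Tx * U + (1 + Ty) * dag Q) :
    (phi l P = mono 0 1 * bar (phi l P) ∧
     phi l Q = mono 1 0 * bar (phi l Q) ∧
     (1 + mono 1 0) * phi l P + (1 + mono 0 1) * phi l Q
       = mono a b + mono 1 0 * mono 0 1 * mono (-a) (-b)) ∧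
    False := by
  have hl0 : 0 < l := hl.pos
  set p := phi l P with hp_def
  set q := phi l Q with hq_def
  have C2 : (2 : R2) = 0 := two_eq_zero
  have RX : mono 1 0 * mono (-1) 0 = 1 := by
    rw [mono_mul]; norm_num [mono_zero]
  have RY : mono 0 1 * mono 0 (-1) = 1 := by
    rw [mono_mul]; norm_num [mono_zero]
  have hnzY : (1 + mono 0 1 : R2) ≠ 0 := by
    intro h
    have h2 : (1 + mono 0 1 : R2).coeff ((0:ℤ),(1:ℤ)) = 0 := by rw [h]; rfl
    rw [AddMonoidAlgebra.coeff_add, Finsupp.add_apply, AddMonoidAlgebra.one_def, mono] at h2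
    rw [AddMonoidAlgebra.coeff_single_apply, AddMonoidAlgebra.coeff_single_apply] at h2
    simp [Prod.ext_iff] at h2
  have hnzX : (1 + mono 1 0 : R2) ≠ 0 := by
    intro h
    have h2 : (1 + mono 1 0 : R2).coeff ((1:ℤ),(0:ℤ)) = 0 := by rw [h]; rfl
    rw [AddMonoidAlgebra.coeff_add, Finsupp.add_apply, AddMonoidAlgebra.one_def, mono] at h2
    rw [AddMonoidAlgebra.coeff_single_apply, AddMonoidAlgebra.coeff_single_apply] at h2
    simp [Prod.ext_iff] at h2
  -- Hermiticity consequences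
  have h1p : p + p * mono 0 (-1) = bar p + mono 0 1 * bar p := by
    have h := congrArg (phi l) hP
    rw [mul_add, mul_one, add_mul, one_mul, phi_add, phi_add,
        phi_mul_dag_right hy, phi_mul_left hy, phi_dag, bar_mono] at h
    simpa using h
  have h1q : q + q * mono (-1) 0 = bar q + mono 1 0 * bar q := by
    have h := congrArg (phi l) hQ
    rw [mul_add, mul_one, add_mul, one_mul, phi_add, phi_add,
        phi_mul_dag_right hx, phi_mul_left hx, phi_dag, bar_mono] at h
    simpa using h
  have facY : (1 + mono 0 1) * (p + mono 0 1 * bar p) = 0 := by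
    linear_combination (mono 0 1) * h1p - p * RY
      + (mono 0 1 * bar p + mono 0 1 * mono 0 1 * bar p) * C2
  have facX : (1 + mono 1 0) * (q + mono 1 0 * bar q) = 0 := by
    linear_combination (mono 1 0) * h1q - q * RX
      + (mono 1 0 * bar q + mono 1 0 * mono 1 0 * bar q) * C2
  have hG1 : p = mono 0 1 * bar p := by
    rcases mul_eq_zero.mp facY with h | h
    · exact absurd h hnzY
    · exact eq_of_add_eq_zero h
  have hG2 : q = mono 1 0 * bar q := by
    rcases mul_eq_zero.mp facX with h | h
    · exact absurd h hnzX
    · exact eq_of_add_eq_zero h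
  -- off-diagonal consequence
  have hTxE : Tx = Emat l 1 0 := repby_unique hl0 hx (emat_repby hl0 1 0)
  have hdx : RepBy l (dag Tx) (mono (-1) 0) := by
    rw [hTxE]
    have h := emat_dag_repby hl0 1 0
    simpa using h
  have hphiU : phi l U = mono a b := by
    have h := phi_mul_left hU (1 : Matrix (Fin l × Fin l) (Fin l × Fin l) R2)
    rwa [mul_one, phi_one hl, mul_one] at h
  have hphiV : phi l V = mono (-a) (-b) := by
    have h := phi_mul_left hU V
    rw [hUV, phi_one hl] at h
    have h2 : mono (-a) (-b) * (mono a b * phi l V) = phi l V := by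
      rw [← mul_assoc, mono_mul]
      simp [mono_zero]
    rw [← h, mul_one] at h2
    exact h2.symm
  have heq : mono 0 1 * mono (-a) (-b) + (p + p * mono (-1) 0)
      = mono (-1) 0 * mono a b + (bar q + mono 0 1 * bar q) := by
    have h := congrArg (phi l) hoff
    rw [mul_add, mul_one, add_mul, one_mul, phi_add, phi_add, phi_add, phi_add,
        phi_mul_left hy V, hphiV, phi_mul_dag_right hx, phi_mul_left hdx U, hphiU,
        phi_mul_left hy (dag Q), phi_dag, bar_mono] at h
    simpa using h
  have hG3 : (1 + mono 1 0) * p + (1 + mono 0 1) * q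
      = mono a b + mono 1 0 * mono 0 1 * mono (-a) (-b) := by
    linear_combination (mono 1 0) * heq + p * RX - (mono a b) * RX + (1 + mono 0 1) * hG2
      + (p - mono a b - mono 1 0 * mono 0 1 * mono (-a) (-b)
         - mono 1 0 * mono (-1) 0 * p + mono 1 0 * mono (-1) 0 * mono a b
         + mono 1 0 * bar q + mono 1 0 * mono 0 1 * bar q) * C2
  refine ⟨⟨hG1, hG2, hG3⟩, ?_⟩
  -- parity obstruction
  have hA := congrArg lamA hG3
  have l1 : (1 + mono 1 0) * p = p + mono 1 0 * p := by ring
  have l2 : (1 + mono 0 1) * q = q + mono 0 1 * q := by ring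
  have l3 : mono 1 0 * mono 0 1 * mono (-a) (-b) = mono (1 + -a) (1 + -b) := by
    rw [mono_mul, mono_mul]
    norm_num
  rw [l1, l2, l3, map_add, map_add, map_add, map_add, lamA_x_mul, lamA_y_mul,
      lamC_eq_zero hG1, lamA_mono, lamA_mono] at hA
  have hL : ∀ s t : ZMod 2, s + (s + 0) + (t + t) = 0 := by decide
  rw [hL (lamA p) (lamA q)] at hA
  split_ifs at hA with ha1 ha2 ha2
  · omega
  · exact absurd hA (by decide)
  · exact absurd hA (by decide)
  · omega
end
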